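/- Let φ(x,ξ) be real-valued, C² on ℝⁿ × (ℝⁿ∖{0}), positively homogeneous of degree 1 in ξ, with |∂_ξ^α ∂_x^β φ| ≤ C_{α,β}|ξ|^{1−|α|} for |α|+|β| ≥ 2, and satisfying the strong non-degeneracy condition |det ∂²φ/∂x∂ξ(x,ξ)| ≥ c > 0 for all x and ξ ≠ 0. Define Φ(x,y,ξ) = φ(x,ξ) − φ(y,ξ). Then there exist constants c₁, c₂ > 0 such that c₁|x−y| ≤ |∇_ξ Φ(x,y,ξ)| ≤ c₂|x−y| for all x, y ∈ ℝⁿ and all ξ in the annulus 1/2 ≤ |ξ| ≤ 2. -/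

import Mathlib

open MeasureTheory

namespace Stmt13Aux

set_option maxHeartbeats 1000000



variable {n : ℕ}

lemma euc_coord_le (u : EuclideanSpace ℝ (Fin n)) (i : Fin n) : |u i| ≤ ‖u‖ := by
  rw [EuclideanSpace.norm_eq]
  rw [show |u i| = Real.sqrt (‖u i‖^2) by
    rw [Real.sqrt_sq_eq_abs]; simp [Real.norm_eq_abs, abs_abs]]
  apply Real.sqrt_le_sqrt
  exact Finset.single_le_sum (f := fun j => ‖u j‖^2) (fun j _ => by positivity)
    (Finset.mem_univ i)

lemma euc_norm_le (u : EuclideanSpace ℝ (Fin n)) (t : ℝ) (ht : 0 ≤ t)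
    (h : ∀ i, |u i| ≤ t) : ‖u‖ ≤ n * t := by
  rw [EuclideanSpace.norm_eq]
  have h1 : ∑ i : Fin n, ‖u i‖^2 ≤ ∑ _i : Fin n, t^2 := by
    apply Finset.sum_le_sum
    intro i _
    rw [Real.norm_eq_abs]
    exact pow_le_pow_left₀ (abs_nonneg _) (h i) 2
  have h2 : Real.sqrt (∑ i : Fin n, ‖u i‖^2) ≤ Real.sqrt (n * t^2) := by
    apply Real.sqrt_le_sqrt
    simpa using h1
  refine h2.trans ?_
  rw [Real.sqrt_mul (by positivity), Real.sqrt_sq ht]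
  have h3 : Real.sqrt n ≤ n := by
    rcases Nat.eq_zero_or_pos n with h | h
    · simp [h]
    · have h4 : (1:ℝ) ≤ n := by exact_mod_cast h
      have : (n:ℝ) ≤ (n:ℝ)^2 := by nlinarith
      calc Real.sqrt n ≤ Real.sqrt ((n:ℝ)^2) := Real.sqrt_le_sqrt this
        _ = n := Real.sqrt_sq (by positivity)
  exact mul_le_mul_of_nonneg_right h3 ht

lemma det_le {m : ℝ} (hm : 0 ≤ m) (B : Matrix (Fin n) (Fin n) ℝ) (h : ∀ i j, |B i j| ≤ m) :
    |B.det| ≤ (n.factorial : ℝ) * m ^ n := by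
  rw [Matrix.det_apply']
  calc |∑ σ : Equiv.Perm (Fin n), ((Equiv.Perm.sign σ : ℤ) : ℝ) * ∏ i, B (σ i) i|
      ≤ ∑ σ : Equiv.Perm (Fin n), |((Equiv.Perm.sign σ : ℤ) : ℝ) * ∏ i, B (σ i) i| :=
        Finset.abs_sum_le_sum_abs _ _
    _ ≤ ∑ _σ : Equiv.Perm (Fin n), m ^ n := by
        apply Finset.sum_le_sum
        intro σ _
        rw [abs_mul]
        have hs : |((Equiv.Perm.sign σ : ℤ) : ℝ)| = 1 := by
          rcases Int.units_eq_one_or (Equiv.Perm.sign σ) with hh | hh <;> rw [hh] <;> norm_num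
        rw [hs, one_mul, Finset.abs_prod]
        calc ∏ i, |B (σ i) i| ≤ ∏ _i : Fin n, m :=
              Finset.prod_le_prod (fun i _ => abs_nonneg _) (fun i _ => h _ _)
          _ = m ^ n := by simp
    _ = (n.factorial : ℝ) * m ^ n := by
        rw [Finset.sum_const, Finset.card_univ, Fintype.card_perm, Fintype.card_fin,
          nsmul_eq_mul]

lemma adjugate_le {m : ℝ} (hm : 1 ≤ m) (B : Matrix (Fin n) (Fin n) ℝ) (h : ∀ i j, |B i j| ≤ m) :
    ∀ i j, |B.adjugate i j| ≤ (n.factorial : ℝ) * m ^ n := by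
  intro i j
  rw [Matrix.adjugate_apply]
  apply det_le (le_trans zero_le_one hm)
  intro i' j'
  rw [Matrix.updateRow_apply]
  split
  · rcases eq_or_ne j' i with rfl | hne
    · simp [Pi.single_apply, hm]
    · simp [Pi.single_apply, hne, le_trans zero_le_one hm]
  · exact h i' j'



lemma euc_sum_apply {n : ℕ} (f : Fin n → EuclideanSpace ℝ (Fin n)) (j : Fin n) :
    (∑ i, f i) j = ∑ i, f i j :=
  by rw [WithLp.ofLp_sum]; exact Finset.sum_apply j Finset.univ _

lemma euc_repr {n : ℕ} (v : EuclideanSpace ℝ (Fin n)) :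
    ∑ i, v i • EuclideanSpace.single i (1:ℝ) = v := by
  ext j
  rw [euc_sum_apply]
  simp [EuclideanSpace.single_apply]

lemma clm_apply_sum {n : ℕ} (f : EuclideanSpace ℝ (Fin n) →L[ℝ] ℝ)
    (v : EuclideanSpace ℝ (Fin n)) :
    f v = ∑ i, v i * f (EuclideanSpace.single i 1) := by
  conv_lhs => rw [← euc_repr v]
  rw [map_sum]
  congr 1; funext i
  rw [_root_.map_smul]; simp

lemma clm_ext_single {n : ℕ} (f h : EuclideanSpace ℝ (Fin n) →L[ℝ] ℝ)
    (H : ∀ j, f (EuclideanSpace.single j 1) = h (EuclideanSpace.single j 1)) : f = h := by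
  ext v
  rw [clm_apply_sum f v, clm_apply_sum h v]
  simp [H]


variable {n : ℕ}

lemma coeff_norm_le (f : EuclideanSpace ℝ (Fin n) →L[ℝ] ℝ)
    (w : EuclideanSpace ℝ (Fin n)) (hw : ∀ j, w j = f (EuclideanSpace.single j 1)) :
    ‖w‖ ≤ ‖f‖ := by
  have hws : ∀ i, ‖w i‖ ^ 2 = w i * f (EuclideanSpace.single i 1) := by
    intro i
    rw [Real.norm_eq_abs, sq_abs, sq, hw i]
  have hfw : f w = ‖w‖ ^ 2 := by
    rw [show f w = ∑ i, w i * f (EuclideanSpace.single i 1) from clm_apply_sum f w]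
    rw [EuclideanSpace.norm_eq, Real.sq_sqrt (by positivity)]
    exact (Finset.sum_congr rfl (fun i _ => hws i)).symm
  rcases eq_or_lt_of_le (norm_nonneg w) with h0 | h0
  · rw [← h0]; exact norm_nonneg f
  · have h1 : ‖w‖ ^ 2 ≤ ‖f‖ * ‖w‖ := by
      rw [← hfw]
      calc f w ≤ |f w| := le_abs_self _
        _ = ‖f w‖ := (Real.norm_eq_abs _).symm
        _ ≤ ‖f‖ * ‖w‖ := f.le_opNorm w
    nlinarith

lemma matrix_lower {c m : ℝ} (hc : 0 < c) (hm : 1 ≤ m) (M : Matrix (Fin n) (Fin n) ℝ)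
    (hent : ∀ i j, |M i j| ≤ m) (hdet : c ≤ |M.det|)
    (v u : EuclideanSpace ℝ (Fin n)) (hu : ∀ j, u j = ∑ i, M i j * v i) :
    c * ‖v‖ ≤ (n : ℝ) * ((n : ℝ) * ((n.factorial : ℝ) * m ^ n)) * ‖u‖ := by
  set β : ℝ := (n.factorial : ℝ) * m ^ n with hβ
  have hβ0 : 0 ≤ β := by positivity
  have hadj : ∀ i j, |M.transpose.adjugate i j| ≤ β := by
    apply adjugate_le hm
    intro i j
    rw [Matrix.transpose_apply]
    exact hent j i
  set vf : Fin n → ℝ := fun i => v i with hvf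
  set uf : Fin n → ℝ := fun i => u i with huf
  have huf2 : uf = M.transpose.mulVec vf := by
    funext j
    simp only [huf, Matrix.mulVec, dotProduct, Matrix.transpose_apply, hvf]
    exact hu j
  have key : M.transpose.adjugate.mulVec uf = M.det • vf := by
    rw [huf2, Matrix.mulVec_mulVec, Matrix.adjugate_mul, Matrix.det_transpose,
      Matrix.smul_mulVec, Matrix.one_mulVec]
  -- coordinatewise bound
  have hcoord : ∀ k, |M.det * v k| ≤ (n : ℝ) * β * ‖u‖ := by
    intro k
    have e1 : M.det * v k = ∑ j, M.transpose.adjugate k j * u j := by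
      have := congrFun key k
      simp only [Matrix.mulVec, dotProduct, Pi.smul_apply, smul_eq_mul] at this
      rw [← this]
    rw [e1]
    calc |∑ j, M.transpose.adjugate k j * u j| ≤ ∑ j, |M.transpose.adjugate k j * u j| :=
          Finset.abs_sum_le_sum_abs _ _
      _ ≤ ∑ _j : Fin n, β * ‖u‖ := by
          apply Finset.sum_le_sum
          intro j _
          rw [abs_mul]
          exact mul_le_mul (hadj k j) (euc_coord_le u j) (abs_nonneg _) hβ0
      _ = (n : ℝ) * (β * ‖u‖) := by simp [mul_comm]
      _ = (n : ℝ) * β * ‖u‖ := by ring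
  have hnorm : ‖M.det • v‖ ≤ (n : ℝ) * ((n : ℝ) * β * ‖u‖) := by
    apply euc_norm_le _ _ (by positivity)
    intro i
    rw [show (M.det • v) i = M.det * v i from rfl]
    exact hcoord i
  have h2 : |M.det| * ‖v‖ ≤ (n : ℝ) * ((n : ℝ) * β * ‖u‖) := by
    rw [← Real.norm_eq_abs, ← norm_smul]
    exact hnorm
  calc c * ‖v‖ ≤ |M.det| * ‖v‖ := mul_le_mul_of_nonneg_right hdet (norm_nonneg v)
    _ ≤ (n : ℝ) * ((n : ℝ) * β * ‖u‖) := h2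
    _ = (n : ℝ) * ((n : ℝ) * β) * ‖u‖ := by ring



lemma norm_comp_isometry {X Y Z : Type*} [NormedAddCommGroup X] [NormedSpace ℝ X]
    [NormedAddCommGroup Y] [NormedSpace ℝ Y] [NormedAddCommGroup Z] [NormedSpace ℝ Z]
    (e : Y →L[ℝ] Z) (he : ∀ u, ‖e u‖ = ‖u‖) (T : X →L[ℝ] Y) : ‖e.comp T‖ = ‖T‖ := by
  apply le_antisymm
  · apply ContinuousLinearMap.opNorm_le_bound _ (norm_nonneg T)
    intro u
    rw [ContinuousLinearMap.comp_apply, he]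
    exact T.le_opNorm u
  · apply ContinuousLinearMap.opNorm_le_bound _ (norm_nonneg _)
    intro u
    rw [← he (T u), ← ContinuousLinearMap.comp_apply]
    exact (e.comp T).le_opNorm u

lemma expansion_core {E F : Type*} [NormedAddCommGroup E] [NormedSpace ℝ E] [ProperSpace E]
    [NormedAddCommGroup F] [NormedSpace ℝ F]
    (g : E → F) (M K : ℝ) (hM : 1 ≤ M) (hK : 1 ≤ K)
    (hLip : ∀ u v : E, dist (g u) (g v) ≤ K * dist u v)
    (hexp : ∀ z : E, ∃ ε > 0, ∀ u v : E, dist u z < ε → dist v z < ε →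
      dist u v ≤ M * dist (g u) (g v))
    (hopen : ∀ z : E, ∀ ε > 0, ∃ δ > 0, ∀ q : F, dist q (g z) < δ →
      ∃ u, dist u z < ε ∧ g u = q)
    (x y : E) : dist x y ≤ M * dist (g x) (g y) := by
  rcases eq_or_ne x y with rfl | hxy
  · simp only [dist_self]
    positivity
  set d : ℝ := dist x y with hd
  have hd0 : 0 < d := dist_pos.mpr hxy
  have hM0 : (0:ℝ) < M := lt_of_lt_of_le one_pos hM
  have hK0 : (0:ℝ) < K := lt_of_lt_of_le one_pos hK
  set R : ℝ := M * K * d + 1 with hR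
  have hR0 : 0 < R := by positivity
  set B : Set E := Metric.closedBall y R with hB
  have hBc : IsCompact B := isCompact_closedBall y R
  have hyB : y ∈ B := by simp [hB, hR0.le]
  -- uniform expansivity radius on B
  obtain ⟨r, hr0, hEXP⟩ : ∃ r > 0, ∀ u ∈ B, ∀ a b : E, dist a u < r → dist b u < r →
      dist a b ≤ M * dist (g a) (g b) := by
    choose ε hε hloc using hexp
    obtain ⟨t, htB, hcover⟩ := hBc.elim_nhds_subcover (fun z => Metric.ball z (ε z / 2))
      (fun z _ => Metric.ball_mem_nhds z (by have := hε z; positivity))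
    have htne : t.Nonempty := by
      rcases Finset.eq_empty_or_nonempty t with rfl | h
      · exfalso
        have := hcover hyB
        simpa using this
      · exact h
    refine ⟨t.inf' htne (fun z => ε z / 2), ?_, ?_⟩
    · rw [gt_iff_lt, Finset.lt_inf'_iff]
      intro z _
      have := hε z; positivity
    · intro u hu a b ha hb
      obtain ⟨z, hzt, hz⟩ := Set.mem_iUnion₂.1 (hcover hu)
      have hinf : t.inf' htne (fun z => ε z / 2) ≤ ε z / 2 := Finset.inf'_le _ hzt
      have hz' : dist u z < ε z / 2 := by simpa [Metric.mem_ball] using hz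
      have ha' : dist a z < ε z :=
        lt_of_le_of_lt (dist_triangle a u z) (by linarith [lt_of_lt_of_le ha hinf])
      have hb' : dist b z < ε z :=
        lt_of_le_of_lt (dist_triangle b u z) (by linarith [lt_of_lt_of_le hb hinf])
      exact hloc z a b ha' hb'
  -- uniform local surjectivity on B
  obtain ⟨ρ, hρ0, hSURJ⟩ : ∃ ρ > 0, ∀ u ∈ B, ∀ q : F, dist q (g u) < ρ →
      ∃ a, dist a u < r ∧ g a = q := by
    have h2 : ∀ z : E, ∃ δ > 0, ∀ q : F, dist q (g z) < δ → ∃ u, dist u z < r/2 ∧ g u = q :=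
      fun z => hopen z (r/2) (by positivity)
    choose δ hδ hsurj using h2
    obtain ⟨t, htB, hcover⟩ := hBc.elim_nhds_subcover
      (fun z => Metric.ball z (min (r/2) (δ z / (2*K))))
      (fun z _ => Metric.ball_mem_nhds z (by have := hδ z; positivity))
    have htne : t.Nonempty := by
      rcases Finset.eq_empty_or_nonempty t with rfl | h
      · exfalso; have := hcover hyB; simpa using this
      · exact h
    refine ⟨t.inf' htne (fun z => δ z / 2), ?_, ?_⟩
    · rw [gt_iff_lt, Finset.lt_inf'_iff]
      intro z _
      have := hδ z; positivity
    · intro u hu q hq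
      obtain ⟨z, hzt, hz⟩ := Set.mem_iUnion₂.1 (hcover hu)
      have hinf : t.inf' htne (fun z => δ z / 2) ≤ δ z / 2 := Finset.inf'_le _ hzt
      have hz' : dist u z < min (r/2) (δ z / (2*K)) := by simpa [Metric.mem_ball] using hz
      have hq2 : dist q (g z) < δ z := by
        have h3 : dist (g u) (g z) ≤ K * dist u z := hLip u z
        have h4 : dist u z < δ z / (2*K) := lt_of_lt_of_le hz' (min_le_right _ _)
        have h5 : K * dist u z < K * (δ z / (2*K)) := by
          exact mul_lt_mul_of_pos_left h4 hK0
        have h6 : K * (δ z / (2*K)) = δ z / 2 := by field_simp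
        calc dist q (g z) ≤ dist q (g u) + dist (g u) (g z) := dist_triangle _ _ _
          _ < δ z / 2 + δ z / 2 := by
              apply add_lt_add_of_lt_of_le (lt_of_lt_of_le hq hinf)
              calc dist (g u) (g z) ≤ K * dist u z := h3
                _ ≤ δ z / 2 := by rw [← h6]; exact (mul_lt_mul_of_pos_left h4 hK0).le
          _ = δ z := by ring
      obtain ⟨a, har, haq⟩ := hsurj z q hq2
      refine ⟨a, ?_, haq⟩
      calc dist a u ≤ dist a z + dist z u := dist_triangle _ _ _
        _ < r/2 + r/2 := by
            apply add_lt_add har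
            rw [dist_comm]
            exact lt_of_lt_of_le hz' (min_le_left _ _)
        _ = r := by ring
  -- choose N large
  obtain ⟨N, hNgt⟩ := exists_nat_gt (K * d / ρ + 3 * M * K * d / r + d / r + 1)
  have hterms : 0 ≤ K * d / ρ ∧ 0 ≤ 3 * M * K * d / r ∧ 0 ≤ d / r := by
    refine ⟨by positivity, by positivity, by positivity⟩
  have hN0 : 0 < (N:ℝ) := by
    have : (1:ℝ) < N := by
      calc (1:ℝ) ≤ K * d / ρ + 3 * M * K * d / r + d / r + 1 := by linarith [hterms.1, hterms.2.1, hterms.2.2]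
        _ < N := hNgt
    linarith
  set J : ℝ := K * d / N with hJ
  set η : ℝ := 2 * K * d / N with hη
  have hJρ : J < ρ := by
    rw [hJ, div_lt_iff₀ hN0]
    have h1 : K * d / ρ < N := by linarith [hterms.2.1, hterms.2.2]
    calc K * d = (K * d / ρ) * ρ := by field_simp
      _ < N * ρ := by exact mul_lt_mul_of_pos_right h1 hρ0
      _ = ρ * N := by ring
  have hJr : M * J + M * η < r := by
    have h1 : 3 * M * K * d / r < N := by linarith [hterms.1, hterms.2.2]
    have h2 : 3 * M * K * d < N * r := by
      rw [div_lt_iff₀ hr0] at h1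
      linarith
    rw [hJ, hη]
    rw [show M * (K * d / N) + M * (2 * K * d / N) = 3 * M * K * d / N by field_simp; ring]
    rw [div_lt_iff₀ hN0]
    linarith [mul_comm (N:ℝ) r]
  have hdNr : d / N < r := by
    have h1 : d / r < N := by linarith [hterms.1, hterms.2.1]
    rw [div_lt_iff₀ hN0]
    rw [div_lt_iff₀ hr0] at h1
    linarith [mul_comm (N:ℝ) r]
  have hJ0 : 0 ≤ J := by positivity
  have hη0 : 0 ≤ η := by positivity
  -- time grid
  set τ : ℕ → ℝ := fun k => ((min k N : ℕ) : ℝ) / N with hτ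
  have hτ0 : τ 0 = 0 := by simp [hτ]
  have hτN : τ N = 1 := by
    simp only [hτ, min_self]
    field_simp
  have hτmem : ∀ k, 0 ≤ τ k ∧ τ k ≤ 1 := by
    intro k
    constructor
    · positivity
    · rw [hτ, div_le_one hN0]
      exact_mod_cast Nat.min_le_right k N
  have hτstab : ∀ k, N ≤ k → τ (k+1) = τ k := by
    intro k hk
    simp only [hτ]
    rw [min_eq_right hk, min_eq_right (le_trans hk (Nat.le_succ k))]
  have hτjump : ∀ k, 0 ≤ τ (k+1) - τ k ∧ τ (k+1) - τ k ≤ 1 / N := by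
    intro k
    have hmono : (min k N : ℕ) ≤ min (k+1) N := min_le_min (Nat.le_succ k) le_rfl
    have hstep : (min (k+1) N : ℕ) ≤ min k N + 1 := by omega
    have h2 : ((min k N : ℕ) : ℝ) ≤ ((min (k+1) N : ℕ) : ℝ) := by exact_mod_cast hmono
    have h3 : ((min (k+1) N : ℕ) : ℝ) ≤ ((min k N : ℕ) : ℝ) + 1 := by exact_mod_cast hstep
    constructor
    · simp only [hτ]
      rw [sub_nonneg]
      gcongr
    · simp only [hτ]
      rw [div_sub_div_same]
      gcongr
      linarith
  -- paths and homotopy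
  set σp : ℝ → F := fun t => g y + t • (g x - g y) with hσp
  set pp : ℝ → F := fun t => g (y + t • (x - y)) with hpp
  set H : ℝ → ℝ → F := fun s t => σp t + s • (pp t - σp t) with hH
  have hσjump : ∀ t t' : ℝ, dist (σp t') (σp t) = |t' - t| * dist (g x) (g y) := by
    intro t t'
    rw [dist_eq_norm, dist_eq_norm]
    have e : σp t' - σp t = (t' - t) • (g x - g y) := by
      simp only [hσp]
      module
    rw [e, norm_smul, Real.norm_eq_abs]
  have hpjump : ∀ t t' : ℝ, dist (pp t') (pp t) ≤ K * (|t' - t| * d) := by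
    intro t t'
    rw [hpp]
    refine (hLip _ _).trans ?_
    have e : dist (y + t' • (x - y)) (y + t • (x - y)) = |t' - t| * d := by
      rw [dist_eq_norm]
      have e2 : (y + t' • (x - y)) - (y + t • (x - y)) = (t' - t) • (x - y) := by module
      rw [e2, norm_smul, Real.norm_eq_abs, hd, dist_eq_norm]
    rw [e]
  have hgxy : dist (g x) (g y) ≤ K * d := hLip x y
  -- jumps of H in t
  have hHt : ∀ s t t' : ℝ, 0 ≤ s → s ≤ 1 →
      dist (H s t') (H s t) ≤ K * d * |t' - t| := by
    intro s t t' hs0 hs1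
    rw [dist_eq_norm]
    have e : H s t' - H s t = (1 - s) • (σp t' - σp t) + s • (pp t' - pp t) := by
      simp only [hH]
      module
    rw [e]
    calc ‖(1 - s) • (σp t' - σp t) + s • (pp t' - pp t)‖
        ≤ ‖(1 - s) • (σp t' - σp t)‖ + ‖s • (pp t' - pp t)‖ := norm_add_le _ _
      _ = (1 - s) * ‖σp t' - σp t‖ + s * ‖pp t' - pp t‖ := by
          rw [norm_smul, norm_smul, Real.norm_eq_abs, Real.norm_eq_abs,
            abs_of_nonneg (by linarith), abs_of_nonneg hs0]
      _ ≤ (1 - s) * (K * d * |t' - t|) + s * (K * d * |t' - t|) := by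
          apply add_le_add
          · apply mul_le_mul_of_nonneg_left _ (by linarith)
            rw [← dist_eq_norm, hσjump]
            calc |t' - t| * dist (g x) (g y) ≤ |t' - t| * (K * d) := by
                  exact mul_le_mul_of_nonneg_left hgxy (abs_nonneg _)
              _ = K * d * |t' - t| := by ring
          · apply mul_le_mul_of_nonneg_left _ hs0
            rw [← dist_eq_norm]
            calc dist (pp t') (pp t) ≤ K * (|t' - t| * d) := hpjump t t'
              _ = K * d * |t' - t| := by ring
      _ = K * d * |t' - t| := by ring
  -- jumps of H in s
  have hHs : ∀ s s' t : ℝ, 0 ≤ t → t ≤ 1 →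
      dist (H s' t) (H s t) ≤ 2 * K * d * |s' - s| := by
    intro s s' t ht0 ht1
    rw [dist_eq_norm]
    have e : H s' t - H s t = (s' - s) • (pp t - σp t) := by
      simp only [hH]; module
    rw [e, norm_smul, Real.norm_eq_abs]
    have h1 : ‖pp t - σp t‖ ≤ 2 * K * d := by
      have e2 : pp t - σp t = (pp t - pp 0) + (σp 0 - σp t) := by
        have : pp 0 = σp 0 := by simp [hpp, hσp]
        rw [this]; abel
      rw [e2]
      calc ‖(pp t - pp 0) + (σp 0 - σp t)‖ ≤ ‖pp t - pp 0‖ + ‖σp 0 - σp t‖ := norm_add_le _ _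
        _ ≤ K * (|t - 0| * d) + |0 - t| * dist (g x) (g y) := by
            apply add_le_add
            · rw [← dist_eq_norm]; exact hpjump 0 t
            · rw [← dist_eq_norm]; exact le_of_eq (hσjump t 0)
        _ ≤ K * (1 * d) + 1 * (K * d) := by
            apply add_le_add
            · apply mul_le_mul_of_nonneg_left _ hK0.le
              apply mul_le_mul_of_nonneg_right _ hd0.le
              rw [abs_of_nonneg (by linarith)]
              linarith
            · apply mul_le_mul (by rw [abs_of_nonpos (by linarith)]; linarith) hgxy dist_nonneg
                zero_le_one
        _ = 2 * K * d := by ring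
    calc |s' - s| * ‖pp t - σp t‖ ≤ |s' - s| * (2 * K * d) :=
          mul_le_mul_of_nonneg_left h1 (abs_nonneg _)
      _ = 2 * K * d * |s' - s| := by ring
  have hH0 : ∀ s : ℝ, H s 0 = g y := by
    intro s
    simp [hH, hσp, hpp]
  have hH1 : ∀ s : ℝ, H s 1 = g x := by
    intro s
    have h1 : pp 1 = g x := by simp [hpp]
    have h2 : σp 1 = g x := by simp [hσp]
    simp [hH, h1, h2]
  set q : ℕ → ℕ → F := fun m k => H (τ m) (τ k) with hq
  have hq0 : ∀ m, q m 0 = g y := by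
    intro m; simp only [hq, hτ0]; exact hH0 _
  have hqN : ∀ m, q m N = g x := by
    intro m; simp only [hq, hτN]; exact hH1 _
  have hqjump : ∀ m k, dist (q m (k+1)) (q m k) ≤ J := by
    intro m k
    simp only [hq]
    calc dist (H (τ m) (τ (k+1))) (H (τ m) (τ k)) ≤ K * d * |τ (k+1) - τ k| :=
          hHt (τ m) (τ k) (τ (k+1)) (hτmem m).1 (hτmem m).2
      _ ≤ K * d * (1 / N) := by
          apply mul_le_mul_of_nonneg_left _ (by positivity)
          rw [abs_of_nonneg (hτjump k).1]
          exact (hτjump k).2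
      _ = J := by rw [hJ]; ring
  have hqstab : ∀ m k, N ≤ k → q m (k+1) = q m k := by
    intro m k hk
    simp only [hq, hτstab k hk]
  have hqs : ∀ m k, dist (q (m+1) k) (q m k) ≤ η := by
    intro m k
    simp only [hq]
    calc dist (H (τ (m+1)) (τ k)) (H (τ m) (τ k)) ≤ 2 * K * d * |τ (m+1) - τ m| :=
          hHs (τ m) (τ (m+1)) (τ k) (hτmem k).1 (hτmem k).2
      _ ≤ 2 * K * d * (1 / N) := by
          apply mul_le_mul_of_nonneg_left _ (by positivity)
          rw [abs_of_nonneg (hτjump m).1]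
          exact (hτjump m).2
      _ = η := by rw [hη]; ring
  have hMNJ : M * (N : ℝ) * J = M * K * d := by
    rw [hJ]; field_simp
  -- generic chain existence
  have chain : ∀ Q : ℕ → F, Q 0 = g y → (∀ k, dist (Q (k+1)) (Q k) ≤ J) →
      (∀ k, N ≤ k → Q (k+1) = Q k) →
      ∃ Z : ℕ → E, Z 0 = y ∧ (∀ k, g (Z k) = Q k) ∧
        (∀ k, dist (Z (k+1)) (Z k) ≤ M * dist (Q (k+1)) (Q k)) ∧
        (∀ k, dist (Z k) y ≤ M * K * d) := by
    intro Q hQ0 hQj hQstab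
    set P : ℕ → E → Prop := fun k z => g z = Q k ∧ dist z y ≤ M * ((min k N : ℕ) : ℝ) * J
      with hP
    have hbd : ∀ k, M * ((min k N : ℕ) : ℝ) * J ≤ M * K * d := by
      intro k
      rw [← hMNJ]
      have : ((min k N : ℕ) : ℝ) ≤ (N : ℝ) := by exact_mod_cast Nat.min_le_right k N
      have h0 : 0 ≤ M * J := by positivity
      calc M * ((min k N : ℕ) : ℝ) * J = ((min k N : ℕ) : ℝ) * (M * J) := by ring
        _ ≤ (N : ℝ) * (M * J) := by exact mul_le_mul_of_nonneg_right this h0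
        _ = M * (N : ℝ) * J := by ring
    have hPB : ∀ k z, P k z → z ∈ B := by
      intro k z hz
      simp only [hB, Metric.mem_closedBall]
      calc dist z y ≤ M * ((min k N : ℕ) : ℝ) * J := hz.2
        _ ≤ M * K * d := hbd k
        _ ≤ R := by rw [hR]; linarith
    have hstep : ∀ k z, P k z → ∃ z' : E, (P (k+1) z') ∧
        dist z' z ≤ M * dist (Q (k+1)) (Q k) := by
      intro k z hz
      have hzB : z ∈ B := hPB k z hz
      have hlt : dist (Q (k+1)) (g z) < ρ := by
        rw [hz.1]
        exact lt_of_le_of_lt (hQj k) hJρ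
      obtain ⟨a, har, hag⟩ := hSURJ z hzB (Q (k+1)) hlt
      have hstep2 : dist a z ≤ M * dist (Q (k+1)) (Q k) := by
        have h3 := hEXP z hzB a z har (by simpa using hr0)
        rw [hag, hz.1] at h3
        exact h3
      refine ⟨a, ⟨hag, ?_⟩, hstep2⟩
      rcases lt_or_ge k N with hkN | hkN
      · have hmin : min (k+1) N = min k N + 1 := by omega
        have hja : dist a z ≤ M * J := hstep2.trans (mul_le_mul_of_nonneg_left (hQj k) hM0.le)
        calc dist a y ≤ dist a z + dist z y := dist_triangle _ _ _
          _ ≤ M * J + M * ((min k N : ℕ) : ℝ) * J := add_le_add hja hz.2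
          _ = M * (((min k N : ℕ) : ℝ) + 1) * J := by ring
          _ = M * ((min (k+1) N : ℕ) : ℝ) * J := by
              rw [hmin]
              push_cast
              ring
      · have hmin : min (k+1) N = min k N := by omega
        have hQeq : Q (k+1) = Q k := hQstab k hkN
        have hja : dist a z ≤ 0 := by
          rw [hQeq] at hstep2
          simpa using hstep2
        calc dist a y ≤ dist a z + dist z y := dist_triangle _ _ _
          _ ≤ 0 + M * ((min k N : ℕ) : ℝ) * J := add_le_add hja hz.2
          _ = M * ((min (k+1) N : ℕ) : ℝ) * J := by rw [hmin]; ring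
    choose f hfP hfd using hstep
    let Zrec : ∀ k : ℕ, {z : E // P k z} := fun k =>
      Nat.rec ⟨y, by
        refine ⟨hQ0.symm, ?_⟩
        simp⟩ (fun k ih => ⟨f k ih.1 ih.2, hfP k ih.1 ih.2⟩) k
    refine ⟨fun k => (Zrec k).1, rfl, fun k => (Zrec k).2.1, fun k => ?_, fun k => ?_⟩
    · exact hfd k (Zrec k).1 (Zrec k).2
    · exact (Zrec k).2.2.trans (hbd k)
  -- comparison of two chains
  have compare : ∀ (Q Q' : ℕ → F) (Z Z' : ℕ → E),
      (∀ k, g (Z k) = Q k) → (∀ k, g (Z' k) = Q' k) → Z 0 = y → Z' 0 = y →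
      (∀ k, dist (Z (k+1)) (Z k) ≤ M * dist (Q (k+1)) (Q k)) →
      (∀ k, dist (Z' (k+1)) (Z' k) ≤ M * dist (Q' (k+1)) (Q' k)) →
      (∀ k, dist (Z k) y ≤ M * K * d) →
      (∀ k, dist (Q (k+1)) (Q k) ≤ J) → (∀ k, dist (Q' (k+1)) (Q' k) ≤ J) →
      (∀ k, dist (Q k) (Q' k) ≤ η) →
      ∀ k, dist (Z k) (Z' k) ≤ M * dist (Q k) (Q' k) := by
    intro Q Q' Z Z' hgZ hgZ' hZ0 hZ'0 hsZ hsZ' hyZ hjQ hjQ' hQQ'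
    intro k
    induction k with
    | zero =>
        rw [hZ0, hZ'0]
        simp only [dist_self]
        positivity
    | succ k ih =>
        have hMJ0 : 0 ≤ M * η := by positivity
        have h1 : dist (Z (k+1)) (Z k) ≤ M * J :=
          (hsZ k).trans (mul_le_mul_of_nonneg_left (hjQ k) hM0.le)
        have hIH : dist (Z k) (Z' k) ≤ M * η :=
          ih.trans (mul_le_mul_of_nonneg_left (hQQ' k) hM0.le)
        have h2 : dist (Z' (k+1)) (Z k) ≤ M * J + M * η := by
          calc dist (Z' (k+1)) (Z k) ≤ dist (Z' (k+1)) (Z' k) + dist (Z' k) (Z k) :=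
                dist_triangle _ _ _
            _ ≤ M * J + M * η := by
                apply add_le_add
                · exact (hsZ' k).trans (mul_le_mul_of_nonneg_left (hjQ' k) hM0.le)
                · rw [dist_comm]; exact hIH
        have hzB : Z k ∈ B := by
          simp only [hB, Metric.mem_closedBall]
          exact (hyZ k).trans (by rw [hR]; linarith)
        have h3 := hEXP (Z k) hzB (Z (k+1)) (Z' (k+1))
          (lt_of_le_of_lt h1 (by linarith)) (lt_of_le_of_lt h2 hJr)
        rw [hgZ (k+1), hgZ' (k+1)] at h3
        exact h3
  -- the family of chains
  have hch : ∀ m, ∃ Z : ℕ → E, Z 0 = y ∧ (∀ k, g (Z k) = q m k) ∧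
      (∀ k, dist (Z (k+1)) (Z k) ≤ M * dist (q m (k+1)) (q m k)) ∧
      (∀ k, dist (Z k) y ≤ M * K * d) :=
    fun m => chain (q m) (hq0 m) (hqjump m) (hqstab m)
  choose Zc hZc0 hZcg hZcstep hZcy using hch
  -- endpoints all agree
  have hmstep : ∀ m, Zc (m+1) N = Zc m N := by
    intro m
    have h4 := compare (q (m+1)) (q m) (Zc (m+1)) (Zc m)
      (hZcg (m+1)) (hZcg m) (hZc0 (m+1)) (hZc0 m)
      (hZcstep (m+1)) (hZcstep m) (hZcy (m+1))
      (hqjump (m+1)) (hqjump m) (hqs m) N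
    rw [hqN, hqN] at h4
    simp only [dist_self, mul_zero] at h4
    exact dist_le_zero.mp h4
  have hconst : ∀ m, Zc m N = Zc 0 N := by
    intro m
    induction m with
    | zero => rfl
    | succ m ih => rw [hmstep m, ih]
  -- the explicit chain along the segment (for m = N)
  set W : ℕ → E := fun k => y + τ k • (x - y) with hW
  have hW0 : W 0 = y := by simp [hW, hτ0]
  have hWN : W N = x := by simp [hW, hτN]
  have hH1p : ∀ t : ℝ, H 1 t = pp t := by
    intro t
    simp only [hH, one_smul]
    abel
  have hgW : ∀ k, g (W k) = q N k := by
    intro k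
    simp only [hq, hτN, hH1p, hpp, hW]
  have hWdist : ∀ k k' : ℕ, dist (W k') (W k) = |τ k' - τ k| * d := by
    intro k k'
    rw [hW]
    simp only
    rw [dist_eq_norm]
    have e : (y + τ k' • (x - y)) - (y + τ k • (x - y)) = (τ k' - τ k) • (x - y) := by module
    rw [e, norm_smul, Real.norm_eq_abs, hd, dist_eq_norm]
  have hWy : ∀ k, dist (W k) y ≤ d := by
    intro k
    have := hWdist 0 k
    rw [hτ0] at this
    have e : W 0 = y := hW0
    rw [← e]
    rw [this]
    rw [sub_zero, abs_of_nonneg (hτmem k).1]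
    calc τ k * d ≤ 1 * d := mul_le_mul_of_nonneg_right (hτmem k).2 hd0.le
      _ = d := one_mul d
  have hdMKd : d ≤ M * K * d := by
    have h1 : (1:ℝ) * 1 ≤ M * K := mul_le_mul hM hK zero_le_one hM0.le
    calc d = 1 * d := (one_mul d).symm
      _ ≤ (M * K) * d := mul_le_mul_of_nonneg_right (by linarith) hd0.le
      _ = M * K * d := by ring
  have hWB : ∀ k, W k ∈ B := by
    intro k
    simp only [hB, Metric.mem_closedBall]
    calc dist (W k) y ≤ d := hWy k
      _ ≤ R := by rw [hR]; linarith
  have hWstep : ∀ k, dist (W (k+1)) (W k) ≤ M * dist (q N (k+1)) (q N k) := by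
    intro k
    have hlt : dist (W (k+1)) (W k) < r := by
      rw [hWdist k (k+1), abs_of_nonneg (hτjump k).1]
      calc (τ (k+1) - τ k) * d ≤ (1/N) * d := mul_le_mul_of_nonneg_right (hτjump k).2 hd0.le
        _ = d / N := by ring
        _ < r := hdNr
    have h5 := hEXP (W k) (hWB k) (W (k+1)) (W k) hlt (by simpa using hr0)
    rw [hgW (k+1), hgW k] at h5
    exact h5
  have hqNη : ∀ k, dist (q N k) (q N k) ≤ η := by
    intro k
    simp only [dist_self]
    exact hη0
  have hWx : Zc N N = x := by
    have h6 := compare (q N) (q N) (Zc N) W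
      (hZcg N) hgW (hZc0 N) hW0
      (hZcstep N) hWstep (hZcy N)
      (hqjump N) (hqjump N) hqNη N
    simp only [dist_self, mul_zero] at h6
    have := dist_le_zero.mp h6
    rw [this, hWN]
  -- distance estimate along the σ chain
  have hq0σ : ∀ k, q 0 k = σp (τ k) := by
    intro k
    simp only [hq, hτ0, hH]
    rw [zero_smul, add_zero]
  have hZc0N : dist (Zc 0 N) y ≤ M * dist (g x) (g y) := by
    have h7 : dist (Zc 0 0) (Zc 0 N) ≤ ∑ i ∈ Finset.range N, dist (Zc 0 i) (Zc 0 (i+1)) :=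
      dist_le_range_sum_dist (Zc 0) N
    rw [hZc0 0] at h7
    rw [dist_comm]
    refine h7.trans ?_
    have h8 : ∀ i, dist (Zc 0 i) (Zc 0 (i+1)) ≤ M * dist (g x) (g y) * (τ (i+1) - τ i) := by
      intro i
      rw [dist_comm]
      refine (hZcstep 0 i).trans (le_of_eq ?_)
      rw [hq0σ, hq0σ, hσjump, abs_of_nonneg (hτjump i).1]
      ring
    calc ∑ i ∈ Finset.range N, dist (Zc 0 i) (Zc 0 (i+1))
        ≤ ∑ i ∈ Finset.range N, M * dist (g x) (g y) * (τ (i+1) - τ i) :=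
          Finset.sum_le_sum (fun i _ => h8 i)
      _ = M * dist (g x) (g y) * ∑ i ∈ Finset.range N, (τ (i+1) - τ i) := by
          rw [Finset.mul_sum]
      _ = M * dist (g x) (g y) * (τ N - τ 0) := by rw [Finset.sum_range_sub]
      _ = M * dist (g x) (g y) := by rw [hτN, hτ0]; ring
  -- conclude
  have hfin : x = Zc 0 N := by rw [← hWx, hconst N]
  calc dist x y = dist (Zc 0 N) y := by rw [← hfin]
    _ ≤ M * dist (g x) (g y) := hZc0N



end Stmt13Aux

set_option maxHeartbeats 2000000 in
open Stmt13Aux in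
/-- Two-sided gradient estimate for the difference phase Φ(x,y,ξ) = φ(x,ξ) − φ(y,ξ). -/
theorem stmt_13 (n : ℕ)
    (φ : EuclideanSpace ℝ (Fin n) → EuclideanSpace ℝ (Fin n) → ℝ)
    (hsm : ContDiffOn ℝ 2 (fun pr : EuclideanSpace ℝ (Fin n) × EuclideanSpace ℝ (Fin n) =>
      φ pr.1 pr.2) {pr | pr.2 ≠ 0})
    (hhom : ∀ x ξ (t : ℝ), 0 < t → φ x (t • ξ) = t * φ x ξ)
    (hΦ2 : ∀ a b : ℕ, 2 ≤ a + b → ∃ C : ℝ, ∀ x (ξ : EuclideanSpace ℝ (Fin n)), ξ ≠ 0 →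
      ‖iteratedFDeriv ℝ a (fun ζ => iteratedFDeriv ℝ b (fun z => φ z ζ) x) ξ‖ ≤
        C * ‖ξ‖ ^ ((1 : ℝ) - a))
    (c : ℝ) (hc : 0 < c)
    (hSND : ∀ x (ξ : EuclideanSpace ℝ (Fin n)), ξ ≠ 0 →
      c ≤ |Matrix.det (Matrix.of fun i j : Fin n =>
        fderiv ℝ (fun ξ' => fderiv ℝ (fun x' => φ x' ξ') x (EuclideanSpace.single i 1))
          ξ (EuclideanSpace.single j 1))|) :
    ∃ c₁ : ℝ, 0 < c₁ ∧ ∃ c₂ : ℝ, 0 < c₂ ∧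
      ∀ x y (ξ : EuclideanSpace ℝ (Fin n)), (1 : ℝ) / 2 ≤ ‖ξ‖ → ‖ξ‖ ≤ 2 →
        c₁ * ‖x - y‖ ≤ ‖fderiv ℝ (fun ζ => φ x ζ - φ y ζ) ξ‖ ∧
        ‖fderiv ℝ (fun ζ => φ x ζ - φ y ζ) ξ‖ ≤ c₂ * ‖x - y‖ := by
  classical
  obtain ⟨C0, hC0⟩ := hΦ2 1 1 (by norm_num)
  set K : ℝ := max C0 1 with hKdef
  have hK1 : (1:ℝ) ≤ K := le_max_right _ _
  have hK0 : (0:ℝ) < K := lt_of_lt_of_le one_pos hK1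
  set β : ℝ := (n.factorial : ℝ) * K ^ n with hβdef
  set M₀ : ℝ := max ((n:ℝ) * ((n:ℝ) * β) / c) 1 with hM₀def
  have hM₀1 : (1:ℝ) ≤ M₀ := le_max_right _ _
  have hM₀0 : (0:ℝ) < M₀ := lt_of_lt_of_le one_pos hM₀1
  set M' : ℝ := 2 * M₀ with hM'def
  have hM'0 : (0:ℝ) < M' := by rw [hM'def]; positivity
  refine ⟨1 / M', by positivity, K, hK0, ?_⟩
  intro x y ξ hξ1 _hξ2
  have hξ0 : ξ ≠ 0 := by
    intro h
    rw [h, norm_zero] at hξ1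
    norm_num at hξ1
  -- abbreviations
  set Ψ : EuclideanSpace ℝ (Fin n) × EuclideanSpace ℝ (Fin n) → ℝ :=
    fun pr => φ pr.1 pr.2 with hΨdef
  set D : Set (EuclideanSpace ℝ (Fin n) × EuclideanSpace ℝ (Fin n)) := {pr | pr.2 ≠ 0}
    with hDdef
  have hD : IsOpen D := by
    have : D = Prod.snd ⁻¹' ({0}ᶜ) := rfl
    rw [this]
    exact isOpen_compl_singleton.preimage continuous_snd
  have hdiffΨ : ∀ pr : EuclideanSpace ℝ (Fin n) × EuclideanSpace ℝ (Fin n), pr.2 ≠ 0 →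
      DifferentiableAt ℝ Ψ pr := by
    intro pr hpr
    exact (hsm.differentiableOn (by norm_num)).differentiableAt (hD.mem_nhds hpr)
  set Bd : (EuclideanSpace ℝ (Fin n) × EuclideanSpace ℝ (Fin n)) →
      (EuclideanSpace ℝ (Fin n) × EuclideanSpace ℝ (Fin n)) →L[ℝ] ℝ := fderiv ℝ Ψ with hBddef
  have hBd : ContDiffOn ℝ 1 Bd D := hsm.fderiv_of_isOpen hD (by norm_num)
  have hBdiff : ∀ pr : EuclideanSpace ℝ (Fin n) × EuclideanSpace ℝ (Fin n), pr.2 ≠ 0 →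
      DifferentiableAt ℝ Bd pr := by
    intro pr hpr
    exact (hBd.differentiableOn one_ne_zero).differentiableAt (hD.mem_nhds hpr)
  set Wd : EuclideanSpace ℝ (Fin n) →
      (EuclideanSpace ℝ (Fin n) × EuclideanSpace ℝ (Fin n)) →L[ℝ]
      (EuclideanSpace ℝ (Fin n) × EuclideanSpace ℝ (Fin n)) →L[ℝ] ℝ :=
    fun z => fderiv ℝ Bd (z, ξ) with hWddef
  have hW : ∀ z, HasFDerivAt Bd (Wd z) (z, ξ) := fun z => (hBdiff (z, ξ) hξ0).hasFDerivAt
  have hsymm : ∀ z v w, Wd z v w = Wd z w v := by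
    intro z
    apply second_derivative_symmetric_of_eventually (f := Ψ) (f' := Bd) (x := (z, ξ))
    · filter_upwards [hD.mem_nhds (show (z, ξ) ∈ D from hξ0)] with p hp
      exact (hdiffΨ p hp).hasFDerivAt
    · exact hW z
  -- partial derivatives
  have hpartξ : ∀ (z ζ : EuclideanSpace ℝ (Fin n)), ζ ≠ 0 →
      HasFDerivAt (fun ζ' => φ z ζ')
        ((Bd (z, ζ)).comp (ContinuousLinearMap.inr ℝ _ _)) ζ := by
    intro z ζ hζ
    exact ((hdiffΨ (z, ζ) hζ).hasFDerivAt.comp ζ (hasFDerivAt_prodMk_right z ζ))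
  have hpartx : ∀ (z ζ : EuclideanSpace ℝ (Fin n)), ζ ≠ 0 →
      HasFDerivAt (fun x' => φ x' ζ)
        ((Bd (z, ζ)).comp (ContinuousLinearMap.inl ℝ _ _)) z := by
    intro z ζ hζ
    exact ((hdiffΨ (z, ζ) hζ).hasFDerivAt.comp z (hasFDerivAt_prodMk_left (𝕜 := ℝ) z ζ))
  set g : EuclideanSpace ℝ (Fin n) → (EuclideanSpace ℝ (Fin n) →L[ℝ] ℝ) :=
    fun z => (Bd (z, ξ)).comp (ContinuousLinearMap.inr ℝ _ _) with hgdef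
  have hgoalrw : fderiv ℝ (fun ζ => φ x ζ - φ y ζ) ξ = g x - g y :=
    ((hpartξ x ξ hξ0).sub (hpartξ y ξ hξ0)).fderiv
  -- strict derivative of g
  set P : ((EuclideanSpace ℝ (Fin n) × EuclideanSpace ℝ (Fin n)) →L[ℝ] ℝ) →L[ℝ]
      (EuclideanSpace ℝ (Fin n) →L[ℝ] ℝ) :=
    (ContinuousLinearMap.compL ℝ (EuclideanSpace ℝ (Fin n))
      (EuclideanSpace ℝ (Fin n) × EuclideanSpace ℝ (Fin n)) ℝ).flip
      (ContinuousLinearMap.inr ℝ _ _) with hPdef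
  set Pl : ((EuclideanSpace ℝ (Fin n) × EuclideanSpace ℝ (Fin n)) →L[ℝ] ℝ) →L[ℝ]
      (EuclideanSpace ℝ (Fin n) →L[ℝ] ℝ) :=
    (ContinuousLinearMap.compL ℝ (EuclideanSpace ℝ (Fin n))
      (EuclideanSpace ℝ (Fin n) × EuclideanSpace ℝ (Fin n)) ℝ).flip
      (ContinuousLinearMap.inl ℝ _ _) with hPldef
  set A : EuclideanSpace ℝ (Fin n) →
      (EuclideanSpace ℝ (Fin n) →L[ℝ] EuclideanSpace ℝ (Fin n) →L[ℝ] ℝ) :=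
    fun z => P.comp ((Wd z).comp (ContinuousLinearMap.inl ℝ _ _)) with hAdef
  have hBzfd : ∀ z, HasFDerivAt (fun z' => Bd (z', ξ))
      ((Wd z).comp (ContinuousLinearMap.inl ℝ _ _)) z := by
    intro z
    exact (hW z).comp z (hasFDerivAt_prodMk_left z ξ)
  have hcontBz : ContDiff ℝ 1 (fun z' : EuclideanSpace ℝ (Fin n) => Bd (z', ξ)) := by
    rw [← contDiffOn_univ]
    exact hBd.comp ((contDiff_id.prodMk contDiff_const).contDiffOn) (fun z _ => hξ0)
  have hgA : ∀ z, HasStrictFDerivAt g (A z) z := by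
    intro z
    have h1 : HasStrictFDerivAt (fun z' => Bd (z', ξ))
        (fderiv ℝ (fun z' => Bd (z', ξ)) z) z :=
      (hcontBz.contDiffAt).hasStrictFDerivAt one_ne_zero
    rw [(hBzfd z).fderiv] at h1
    exact (P.hasStrictFDerivAt).comp z h1
  have hAapp : ∀ z v w, A z v w = Wd z (v, 0) (0, w) := by
    intro z v w
    simp [hAdef, hPdef, ContinuousLinearMap.compL_apply, ContinuousLinearMap.flip_apply]
  -- second mixed derivative in the other order
  have hfeq : ∀ z : EuclideanSpace ℝ (Fin n),
      (fun ζ => fderiv ℝ (fun x' => φ x' ζ) z) =ᶠ[nhds ξ] (fun ζ => Pl (Bd (z, ζ))) := by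
    intro z
    filter_upwards [isOpen_compl_singleton.mem_nhds (show ξ ∈ ({0}ᶜ : Set _) from hξ0)]
      with ζ hζ
    have := (hpartx z ζ hζ).fderiv
    rw [this]
    simp [hPldef, ContinuousLinearMap.compL_apply, ContinuousLinearMap.flip_apply]
  have hfd : ∀ z, HasFDerivAt (fun ζ => fderiv ℝ (fun x' => φ x' ζ) z)
      (Pl.comp ((Wd z).comp (ContinuousLinearMap.inr ℝ _ _))) ξ := by
    intro z
    have h1 : HasFDerivAt (fun ζ => Pl (Bd (z, ζ)))
        (Pl.comp ((Wd z).comp (ContinuousLinearMap.inr ℝ _ _))) ξ :=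
      (Pl.hasFDerivAt).comp ξ ((hW z).comp ξ (hasFDerivAt_prodMk_right z ξ))
    exact h1.congr_of_eventuallyEq (hfeq z)
  set S : EuclideanSpace ℝ (Fin n) →
      (EuclideanSpace ℝ (Fin n) →L[ℝ] EuclideanSpace ℝ (Fin n) →L[ℝ] ℝ) :=
    fun z => fderiv ℝ (fun ζ => fderiv ℝ (fun x' => φ x' ζ) z) ξ with hSdef
  have hS : ∀ z, S z = Pl.comp ((Wd z).comp (ContinuousLinearMap.inr ℝ _ _)) :=
    fun z => (hfd z).fderiv
  have hfd2 : ∀ z, HasFDerivAt (fun ζ => fderiv ℝ (fun x' => φ x' ζ) z) (S z) ξ := by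
    intro z
    rw [hS z]
    exact hfd z
  have hSapp : ∀ z v w, S z v w = Wd z (0, v) (w, 0) := by
    intro z v w
    rw [hS z]
    simp [hPldef, ContinuousLinearMap.compL_apply, ContinuousLinearMap.flip_apply]
  have hAS : ∀ z, A z = (S z).flip := by
    intro z
    ext v w
    rw [ContinuousLinearMap.flip_apply, hAapp, hSapp, hsymm]
  -- norm bound on S (hence A)
  have hSnorm : ∀ z, ‖S z‖ ≤ K := by
    intro z
    have hb := hC0 z ξ hξ0
    have hrw : ((1:ℝ) - ((1:ℕ):ℝ)) = 0 := by norm_num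
    rw [hrw, Real.rpow_zero, mul_one] at hb
    set ι := (continuousMultilinearCurryFin1 ℝ (EuclideanSpace ℝ (Fin n)) ℝ).symm with hι
    have hiso : (fun ζ : EuclideanSpace ℝ (Fin n) =>
        iteratedFDeriv ℝ 1 (fun x' => φ x' ζ) z) =
        (⇑ι ∘ fun ζ => fderiv ℝ (fun x' => φ x' ζ) z) := by
      funext ζ
      ext m
      simp only [Function.comp_apply, iteratedFDeriv_one_apply]
      simp [hι]
    rw [hiso] at hb
    have h2 : ‖iteratedFDeriv ℝ 1 (⇑ι ∘ fun ζ => fderiv ℝ (fun x' => φ x' ζ) z) ξ‖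
        = ‖fderiv ℝ (⇑ι ∘ fun ζ => fderiv ℝ (fun x' => φ x' ζ) z) ξ‖ := by
      rw [← norm_iteratedFDeriv_fderiv (n := 0), norm_iteratedFDeriv_zero]
    rw [h2, LinearIsometryEquiv.comp_fderiv] at hb
    rw [norm_comp_isometry _ (fun u => by simp) _] at hb
    calc ‖S z‖ = ‖fderiv ℝ (fun ζ => fderiv ℝ (fun x' => φ x' ζ) z) ξ‖ := rfl
      _ ≤ C0 := hb
      _ ≤ K := le_max_left _ _
  have hAnorm : ∀ z, ‖A z‖ ≤ K := by
    intro z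
    rw [hAS z, ContinuousLinearMap.opNorm_flip]
    exact hSnorm z
  -- the matrix of the mixed Hessian
  set Mm : EuclideanSpace ℝ (Fin n) → Matrix (Fin n) (Fin n) ℝ :=
    fun z => Matrix.of fun i j : Fin n =>
      fderiv ℝ (fun ξ' => fderiv ℝ (fun x' => φ x' ξ') z (EuclideanSpace.single i 1))
        ξ (EuclideanSpace.single j 1) with hMmdef
  have hMmS : ∀ z i j, Mm z i j = S z (EuclideanSpace.single j 1) (EuclideanSpace.single i 1)
      := by
    intro z i j
    have h1 : HasFDerivAt
        (⇑(ContinuousLinearMap.apply ℝ ℝ (EuclideanSpace.single i 1)) ∘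
          (fun ζ => fderiv ℝ (fun x' => φ x' ζ) z))
        ((ContinuousLinearMap.apply ℝ ℝ (EuclideanSpace.single i 1)).comp (S z)) ξ :=
      ((ContinuousLinearMap.apply ℝ ℝ (EuclideanSpace.single i 1)).hasFDerivAt).comp ξ
        (hfd2 z)
    rw [show (⇑(ContinuousLinearMap.apply ℝ ℝ (EuclideanSpace.single i 1)) ∘
          (fun ζ => fderiv ℝ (fun x' => φ x' ζ) z)) =
        (fun ξ' => fderiv ℝ (fun x' => φ x' ξ') z (EuclideanSpace.single i 1)) from rfl]
      at h1
    have h2 := h1.fderiv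
    simp only [hMmdef, Matrix.of_apply]
    rw [h2]
    simp
  have hMment : ∀ z i j, |Mm z i j| ≤ K := by
    intro z i j
    rw [hMmS z i j, ← Real.norm_eq_abs]
    calc ‖S z (EuclideanSpace.single j 1) (EuclideanSpace.single i 1)‖
        ≤ ‖S z (EuclideanSpace.single j 1)‖ * ‖(EuclideanSpace.single i (1:ℝ) :
            EuclideanSpace ℝ (Fin n))‖ := ContinuousLinearMap.le_opNorm _ _
      _ ≤ (‖S z‖ * ‖(EuclideanSpace.single j (1:ℝ) : EuclideanSpace ℝ (Fin n))‖) *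
            ‖(EuclideanSpace.single i (1:ℝ) : EuclideanSpace ℝ (Fin n))‖ := by
          apply mul_le_mul_of_nonneg_right (ContinuousLinearMap.le_opNorm _ _) (norm_nonneg _)
      _ = ‖S z‖ := by rw [EuclideanSpace.norm_single, EuclideanSpace.norm_single]; simp
      _ ≤ K := hSnorm z
  have hAe : ∀ z i j, A z (EuclideanSpace.single i 1) (EuclideanSpace.single j 1) = Mm z i j
      := by
    intro z i j
    rw [hAS z, ContinuousLinearMap.flip_apply, hMmS z i j]
  have hAv : ∀ z (v : EuclideanSpace ℝ (Fin n)) j,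
      A z v (EuclideanSpace.single j 1) = ∑ i, Mm z i j * v i := by
    intro z v j
    conv_lhs => rw [← euc_repr v]
    rw [map_sum, ContinuousLinearMap.sum_apply]
    congr 1; funext i
    rw [_root_.map_smul, ContinuousLinearMap.smul_apply, hAe z i j]
    simp [mul_comm]
  -- lower bound for A
  have hAlower : ∀ z (v : EuclideanSpace ℝ (Fin n)), ‖v‖ ≤ M₀ * ‖A z v‖ := by
    intro z v
    set u : EuclideanSpace ℝ (Fin n) :=
      (WithLp.equiv 2 (Fin n → ℝ)).symm (fun j => A z v (EuclideanSpace.single j 1)) with hu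
    have huj : ∀ j, u j = A z v (EuclideanSpace.single j 1) := fun j => rfl
    have hucoord : ∀ j, u j = ∑ i, Mm z i j * v i := by
      intro j
      rw [huj j, hAv]
    have hml := matrix_lower hc hK1 (Mm z) (hMment z) (hSND z ξ hξ0) v u hucoord
    have hun : ‖u‖ ≤ ‖A z v‖ := coeff_norm_le (A z v) u huj
    have h3 : c * ‖v‖ ≤ (n:ℝ) * ((n:ℝ) * β) * ‖A z v‖ := by
      calc c * ‖v‖ ≤ (n:ℝ) * ((n:ℝ) * ((n.factorial : ℝ) * K ^ n)) * ‖u‖ := hml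
        _ ≤ (n:ℝ) * ((n:ℝ) * β) * ‖A z v‖ := by
            rw [← hβdef]
            apply mul_le_mul_of_nonneg_left hun (by positivity)
    have h4 : ‖v‖ ≤ ((n:ℝ) * ((n:ℝ) * β) / c) * ‖A z v‖ := by
      rw [div_mul_eq_mul_div, le_div_iff₀ hc]
      calc ‖v‖ * c = c * ‖v‖ := by ring
        _ ≤ (n:ℝ) * ((n:ℝ) * β) * ‖A z v‖ := h3
    calc ‖v‖ ≤ ((n:ℝ) * ((n:ℝ) * β) / c) * ‖A z v‖ := h4
      _ ≤ M₀ * ‖A z v‖ :=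
          mul_le_mul_of_nonneg_right (le_max_left _ _) (norm_nonneg _)
  -- Lipschitz bound
  have hLipg : ∀ u v : EuclideanSpace ℝ (Fin n), dist (g u) (g v) ≤ K * dist u v := by
    intro u v
    rw [dist_eq_norm, dist_eq_norm]
    exact Convex.norm_image_sub_le_of_norm_hasFDerivWithin_le
      (fun z _ => (hgA z).hasFDerivAt.hasFDerivWithinAt)
      (fun z _ => hAnorm z) convex_univ (Set.mem_univ v) (Set.mem_univ u)
  -- local expansivity
  have hexpg : ∀ z : EuclideanSpace ℝ (Fin n), ∃ ε > 0,
      ∀ u v, dist u z < ε → dist v z < ε → dist u v ≤ M' * dist (g u) (g v) := by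
    intro z
    have hlo := (hgA z).isLittleO.def (show (0:ℝ) < 1/(2*M₀) by positivity)
    rw [Metric.eventually_nhds_iff] at hlo
    obtain ⟨ε, hε0, hball⟩ := hlo
    refine ⟨ε, hε0, ?_⟩
    intro u v hu hv
    have hp : dist ((u, v) : _ × _) ((z, z)) < ε := by
      rw [Prod.dist_eq]
      exact max_lt hu hv
    have h3 := hball hp
    simp only at h3
    have h4 : ‖A z (u - v)‖ ≤ ‖g u - g v‖ + 1/(2*M₀) * ‖u - v‖ := by
      calc ‖A z (u - v)‖ = ‖(g u - g v) - ((g u - g v) - A z (u - v))‖ := by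
            rw [sub_sub_cancel]
        _ ≤ ‖g u - g v‖ + ‖(g u - g v) - A z (u - v)‖ := norm_sub_le _ _
        _ ≤ ‖g u - g v‖ + 1/(2*M₀) * ‖u - v‖ := by
            exact add_le_add le_rfl h3
    have h5 : ‖u - v‖ ≤ M₀ * ‖A z (u - v)‖ := hAlower z (u - v)
    have h6 : M₀ * (1/(2*M₀)) = 1/2 := by field_simp
    have h7 : M₀ * ‖A z (u-v)‖ ≤ M₀ * ‖g u - g v‖ + (1/2) * ‖u - v‖ := by
      calc M₀ * ‖A z (u-v)‖ ≤ M₀ * (‖g u - g v‖ + 1/(2*M₀) * ‖u - v‖) :=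
            mul_le_mul_of_nonneg_left h4 hM₀0.le
        _ = M₀ * ‖g u - g v‖ + (M₀ * (1/(2*M₀))) * ‖u - v‖ := by ring
        _ = M₀ * ‖g u - g v‖ + (1/2) * ‖u - v‖ := by rw [h6]
    rw [dist_eq_norm, dist_eq_norm, hM'def]
    linarith
  -- local openness
  have hopeng : ∀ z : EuclideanSpace ℝ (Fin n), ∀ ε > 0, ∃ δ > 0,
      ∀ q, dist q (g z) < δ → ∃ u, dist u z < ε ∧ g u = q := by
    intro z ε hε
    have hdet0 : (Mm z).det ≠ 0 := by
      intro h0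
      have := hSND z ξ hξ0
      rw [show (Matrix.of fun i j : Fin n =>
        fderiv ℝ (fun ξ' => fderiv ℝ (fun x' => φ x' ξ') z (EuclideanSpace.single i 1))
          ξ (EuclideanSpace.single j 1)) = Mm z from rfl, h0] at this
      simp at this
      linarith
    have hinj : Function.Injective (A z) := by
      intro a b hab
      have h8 : ‖a - b‖ ≤ M₀ * ‖A z (a - b)‖ := hAlower z (a - b)
      rw [map_sub, hab, sub_self, norm_zero, mul_zero] at h8
      have h9 : ‖a - b‖ = 0 := le_antisymm h8 (norm_nonneg _)
      rwa [norm_eq_zero, sub_eq_zero] at h9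
    have hsurjA : Function.Surjective (A z) := by
      intro f
      set uf : Fin n → ℝ := fun j => f (EuclideanSpace.single j 1) with hufdef
      set vf : Fin n → ℝ := (Mm z).det⁻¹ • ((Mm z).transpose.adjugate.mulVec uf) with hvfdef
      set v : EuclideanSpace ℝ (Fin n) := (WithLp.equiv 2 (Fin n → ℝ)).symm vf with hvdef
      refine ⟨v, ?_⟩
      apply clm_ext_single
      intro j
      rw [hAv z v j]
      have hvi : ∀ i, v i = vf i := fun i => rfl
      have hkey : (Mm z).transpose.mulVec vf = uf := by
        rw [hvfdef, Matrix.mulVec_smul, Matrix.mulVec_mulVec, Matrix.mul_adjugate,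
          Matrix.det_transpose, Matrix.smul_mulVec, Matrix.one_mulVec, smul_smul,
          inv_mul_cancel₀ hdet0, one_smul]
      have h10 : ∑ i, Mm z i j * v i = ((Mm z).transpose.mulVec vf) j := by
        simp only [Matrix.mulVec, dotProduct, Matrix.transpose_apply]
        exact Finset.sum_congr rfl (fun i _ => by rw [hvi i])
      rw [h10, hkey]
    have hbij : Function.Bijective (A z) := ⟨hinj, hsurjA⟩
    set Aeq := LinearEquiv.ofBijective ((A z) : EuclideanSpace ℝ (Fin n) →ₗ[ℝ]
      (EuclideanSpace ℝ (Fin n) →L[ℝ] ℝ)) hbij with hAeqdef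
    set AeqL := Aeq.toContinuousLinearEquiv with hAeqLdef
    have hcoe : (AeqL : EuclideanSpace ℝ (Fin n) →L[ℝ] (EuclideanSpace ℝ (Fin n) →L[ℝ] ℝ))
        = A z := by
      ext v
      rfl
    have hstrict : HasStrictFDerivAt g
        (AeqL : EuclideanSpace ℝ (Fin n) →L[ℝ] (EuclideanSpace ℝ (Fin n) →L[ℝ] ℝ)) z := by
      rw [hcoe]
      exact hgA z
    have hmap := hstrict.map_nhds_eq_of_equiv
    have himg : g '' Metric.ball z ε ∈ nhds (g z) := by
      rw [← hmap]
      exact Filter.image_mem_map (Metric.ball_mem_nhds z hε)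
    obtain ⟨δ, hδ0, hδsub⟩ := Metric.mem_nhds_iff.mp himg
    refine ⟨δ, hδ0, fun q hq => ?_⟩
    have hqm : q ∈ Metric.ball (g z) δ := by rwa [Metric.mem_ball]
    obtain ⟨u, hu, hgu⟩ := hδsub hqm
    exact ⟨u, by rwa [← Metric.mem_ball], hgu⟩
  -- apply the core lemma
  have hcore := expansion_core g M' K (by rw [hM'def]; linarith) hK1 hLipg hexpg hopeng x y
  rw [dist_eq_norm, dist_eq_norm] at hcore
  constructor
  · rw [hgoalrw]
    rw [div_mul_eq_mul_div, div_le_iff₀ hM'0, one_mul]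
    calc ‖x - y‖ ≤ M' * ‖g x - g y‖ := hcore
      _ = ‖g x - g y‖ * M' := by ring
  · rw [hgoalrw]
    have := hLipg x y
    rw [dist_eq_norm, dist_eq_norm] at this
    exact this
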